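/- Let α_i, α_j be special simple roots with associated elements w_i, w_j ∈ W_0 and fundamental coweights λ_i∨, λ_j∨. If w_i w_j = 1 then w_i λ_j∨ = −λ_i∨, hence λ_j∨ ≡ −λ_i∨ mod Q∨; if w_i w_j = w_k for a special root α_k, then w_i λ_j∨ = λ_k∨ − λ_i∨, hence λ_i∨ + λ_j∨ ≡ λ_k∨ mod Q∨. -/

import Mathlib

open scoped RealInnerProductSpace

variable {V : Type*} [NormedAddCommGroup V] [InnerProductSpace ℝ V]

/-- The coroot lattice `Q∨`, the ℤ-span of the coroots `α∨ = (2/⟨α,α⟩) • α`. -/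
def corootLattice (R : Finset V) : Submodule ℤ V :=
  Submodule.span ℤ ((fun α => (2 / ⟪α, α⟫) • α) '' (R : Set V))

/-- The Weyl group: the subgroup of linear isometries generated by the
reflections in the roots. -/
def weylGroup (R : Finset V) : Subgroup (V ≃ₗᵢ[ℝ] V) :=
  Subgroup.closure {w | ∃ α ∈ R, ∀ v, w v = v - (2 * ⟪v, α⟫ / ⟪α, α⟫) • α}

/-- Let `α_i, α_j` be special simple roots with associated elements
`w_i, w_j ∈ W_0` and fundamental coweights `λ_i∨, λ_j∨`. If `w_i w_j = 1` then
`w_i λ_j∨ = -λ_i∨`, hence `λ_j∨ ≡ -λ_i∨ mod Q∨`; if `w_i w_j = w_k` for a special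
root `α_k`, then `w_i λ_j∨ = λ_k∨ - λ_i∨`, hence `λ_i∨ + λ_j∨ ≡ λ_k∨ mod Q∨`. -/
theorem special_weyl_composition
    (R : Finset V)
    (h0 : (0 : V) ∉ R)
    (hspan : Submodule.span ℝ (R : Set V) = ⊤)
    (hneg : ∀ α ∈ R, -α ∈ R)
    (hint : ∀ α ∈ R, ∀ β ∈ R, ∃ z : ℤ, 2 * ⟪α, β⟫ / ⟪α, α⟫ = (z : ℝ))
    (hrefl : ∀ α ∈ R, ∀ β ∈ R, β - (2 * ⟪β, α⟫ / ⟪α, α⟫) • α ∈ R)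
    (hirr : ∀ R₁ R₂ : Set V, (R : Set V) = R₁ ∪ R₂ →
      (∀ α ∈ R₁, ∀ β ∈ R₂, ⟪α, β⟫ = 0) → R₁ = ∅ ∨ R₂ = ∅)
    (θ : V) (hθR : θ ∈ R) (hθ2 : ⟪θ, θ⟫ = 2)
    (hlong : ∀ α ∈ R, ⟪α, α⟫ ≤ ⟪θ, θ⟫)
    {n : ℕ} (Δ : Fin n → V)
    (hΔR : ∀ i, Δ i ∈ R)
    (hΔind : LinearIndependent ℝ Δ)
    (hbase : ∀ α ∈ R, α ∈ AddSubmonoid.closure (Set.range Δ) ∨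
      -α ∈ AddSubmonoid.closure (Set.range Δ))
    (m : Fin n → ℕ) (hm : ∀ i, 1 ≤ m i)
    (hθsum : θ = ∑ i, (m i : ℝ) • Δ i)
    (ϖ : Fin n → V)
    (hϖ : ∀ i j, ⟪ϖ i, Δ j⟫ = if i = j then 1 else 0)
    (i j : Fin n) (hi : m i = 1) (hj : m j = 1)
    (wi wj : V ≃ₗᵢ[ℝ] V)
    (hwiW : wi ∈ weylGroup R) (hwjW : wj ∈ weylGroup R)
    (hwistab : (fun v => wi v) '' (insert (-θ) (Set.range Δ)) =
      insert (-θ) (Set.range Δ))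
    (hwjstab : (fun v => wj v) '' (insert (-θ) (Set.range Δ)) =
      insert (-θ) (Set.range Δ))
    (hwiθ : wi (-θ) = Δ i) (hwjθ : wj (-θ) = Δ j) :
    (wi * wj = 1 →
      wi (ϖ j) = -(ϖ i) ∧ ϖ j + ϖ i ∈ corootLattice R) ∧
    (∀ k, m k = 1 → ∀ wk : V ≃ₗᵢ[ℝ] V, wk ∈ weylGroup R →
      (fun v => wk v) '' (insert (-θ) (Set.range Δ)) = insert (-θ) (Set.range Δ) →
      wk (-θ) = Δ k → wi * wj = wk →
      wi (ϖ j) = ϖ k - ϖ i ∧ ϖ i + ϖ j - ϖ k ∈ corootLattice R) := by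
  classical
  have hΔinj : Function.Injective Δ := hΔind.injective
  have hϖ' : ∀ p l : Fin n, ⟪Δ l, ϖ p⟫ = if p = l then 1 else 0 := fun p l => by
    rw [real_inner_comm]; exact hϖ p l
  -- `-θ` is not a simple root
  have hθΔ : ∀ l, Δ l ≠ -θ := by
    intro l0 h
    have h2 : ∑ l, ((m l : ℝ) + if l = l0 then 1 else 0) • Δ l = 0 := by
      have e1 : ∑ l, (if l = l0 then (1:ℝ) else 0) • Δ l = Δ l0 := by
        simp [ite_smul]
      simp only [add_smul, Finset.sum_add_distrib, e1, ← hθsum]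
      rw [h]; abel
    have := Fintype.linearIndependent_iff.mp hΔind _ h2 l0
    simp at this
    have := (Nat.cast_nonneg (m l0) : (0:ℝ) ≤ m l0)
    linarith
  -- simple roots span
  have hspanΔ : Submodule.span ℝ (Set.range Δ) = ⊤ := by
    rw [eq_top_iff, ← hspan, Submodule.span_le]
    intro α hα
    have hmono : AddSubmonoid.closure (Set.range Δ) ≤
        (Submodule.span ℝ (Set.range Δ)).toAddSubmonoid :=
      AddSubmonoid.closure_le.mpr Submodule.subset_span
    rcases hbase α hα with h | h
    · exact hmono h
    · have h2 : -α ∈ Submodule.span ℝ (Set.range Δ) := hmono h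
      simpa using Submodule.neg_mem _ h2
  -- extensionality against the simple roots
  have hext : ∀ v w : V, (∀ l, ⟪Δ l, v⟫ = ⟪Δ l, w⟫) → v = w := by
    intro v w h
    have hperp : v - w ∈ (Submodule.span ℝ (Set.range Δ))ᗮ := by
      rw [Submodule.mem_orthogonal]
      intro u hu
      induction hu using Submodule.span_induction with
      | mem x hx =>
        obtain ⟨l, rfl⟩ := hx
        rw [inner_sub_right, h l, sub_self]
      | zero => simp
      | add x y _ _ hx hy => rw [inner_add_left, hx, hy, add_zero]
      | smul c x _ hx => rw [real_inner_smul_left, hx, mul_zero]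
    rw [hspanΔ, Submodule.top_orthogonal_eq_bot, Submodule.mem_bot] at hperp
    exact sub_eq_zero.mp hperp
  -- coweights pair integrally with all roots
  have hϖint : ∀ p : Fin n, ∀ α ∈ R, ∃ z : ℤ, ⟪ϖ p, α⟫ = (z : ℝ) := by
    intro p α hα
    have hcl : ∀ x ∈ AddSubmonoid.closure (Set.range Δ),
        ∃ z : ℤ, ⟪ϖ p, x⟫ = (z : ℝ) := by
      intro x hx
      induction hx using AddSubmonoid.closure_induction with
      | mem y hy =>
        obtain ⟨l, rfl⟩ := hy
        rw [hϖ p l]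
        by_cases h : p = l
        · exact ⟨1, by simp [h]⟩
        · exact ⟨0, by simp [h]⟩
      | zero => exact ⟨0, by simp⟩
      | add x y _ _ hx hy =>
        obtain ⟨z1, h1⟩ := hx
        obtain ⟨z2, h2⟩ := hy
        exact ⟨z1 + z2, by rw [inner_add_right, h1, h2]; push_cast; ring⟩
    rcases hbase α hα with h | h
    · exact hcl α h
    · obtain ⟨z, hz⟩ := hcl _ h
      rw [inner_neg_right] at hz
      exact ⟨-z, by push_cast; linarith⟩
  -- the coroot lattice is preserved by any isometry preserving R
  have hQpres : ∀ w : V ≃ₗᵢ[ℝ] V, (∀ α ∈ R, w α ∈ R) →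
      ∀ x ∈ corootLattice R, w x ∈ corootLattice R := by
    intro w hw x hx
    induction hx using Submodule.span_induction with
    | mem y hy =>
      obtain ⟨α, hα, rfl⟩ := hy
      have e : w ((2 / ⟪α, α⟫) • α) = (2 / ⟪w α, w α⟫) • (w α) := by
        rw [map_smul, w.inner_map_map]
      rw [e]
      exact Submodule.subset_span ⟨w α, hw α hα, rfl⟩
    | zero => simp
    | add x y _ _ hx hy => rw [map_add]; exact add_mem hx hy
    | smul c x _ hx => rw [map_zsmul]; exact Submodule.smul_mem _ c hx
  -- elements of the Weyl group preserve R, and move integral coweights by Q∨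
  have hW : ∀ w : V ≃ₗᵢ[ℝ] V, w ∈ weylGroup R →
      (∀ α ∈ R, w α ∈ R) ∧
      ∀ v : V, (∀ α ∈ R, ∃ z : ℤ, ⟪v, α⟫ = (z : ℝ)) →
        v - w v ∈ corootLattice R := by
    intro w hw
    rw [weylGroup] at hw
    induction hw using Subgroup.closure_induction with
    | mem x hx =>
      obtain ⟨α, hα, hxα⟩ := hx
      constructor
      · intro β hβ; rw [hxα β]; exact hrefl α hα β hβ
      · intro v hv
        obtain ⟨z, hz⟩ := hv α hα
        have e1 : v - (v - (2 * ⟪v, α⟫ / ⟪α, α⟫) • α)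
            = ⟪v, α⟫ • ((2 / ⟪α, α⟫) • α) := by
          rw [sub_sub_cancel, smul_smul]
          congr 1; ring
        rw [hxα v, e1, hz, Int.cast_smul_eq_zsmul]
        exact Submodule.smul_mem _ z (Submodule.subset_span ⟨α, hα, rfl⟩)
    | one => exact ⟨fun α hα => by simpa using hα, fun v _ => by simp⟩
    | mul x y hx hy ihx ihy =>
      refine ⟨fun α hα => ?_, fun v hv => ?_⟩
      · have : (x * y) α = x (y α) := by rw [LinearIsometryEquiv.coe_mul]; rfl
        rw [this]
        exact ihx.1 _ (ihy.1 α hα)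
      · have h1 := ihx.2 v hv
        have h2 := ihy.2 v hv
        have e : v - (x * y) v = (v - x v) + x (v - y v) := by
          rw [LinearIsometryEquiv.coe_mul, map_sub]
          simp only [Function.comp_apply]
          abel
        rw [e]
        exact add_mem h1 (hQpres x ihx.1 _ h2)
    | inv x hx ihx =>
      have hsurj : ∀ α ∈ R, x⁻¹ α ∈ R := by
        have himg : Finset.image (fun a => x a) R = R := by
          apply Finset.eq_of_subset_of_card_le
          · intro a ha
            obtain ⟨b, hb, rfl⟩ := Finset.mem_image.mp ha
            exact ihx.1 b hb
          · rw [Finset.card_image_of_injective _ x.injective]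
        intro α hα
        rw [← himg] at hα
        obtain ⟨β, hβ, hβα⟩ := Finset.mem_image.mp hα
        have e : x⁻¹ α = β := by
          rw [← hβα, LinearIsometryEquiv.coe_inv]
          exact x.symm_apply_apply β
        rw [e]; exact hβ
      refine ⟨hsurj, fun v hv => ?_⟩
      have h2 := ihx.2 v hv
      have e : v - x⁻¹ v = x⁻¹ (-(v - x v)) := by
        rw [LinearIsometryEquiv.coe_inv, map_neg, map_sub, x.symm_apply_apply]
        abel
      rw [e]
      exact hQpres x⁻¹ hsurj _ (neg_mem h2)
  -- key computation of inner products of w (ϖ q) with the simple roots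
  have key : ∀ (p q : Fin n) (w : V ≃ₗᵢ[ℝ] V),
      (fun v => w v) '' (insert (-θ) (Set.range Δ)) = insert (-θ) (Set.range Δ) →
      w (-θ) = Δ p →
      (∀ l, l ≠ p → ⟪Δ l, w (ϖ q)⟫ = if Δ l = w (Δ q) then 1 else 0) ∧
      ⟪Δ p, w (ϖ q)⟫ = -(m q : ℝ) := by
    intro p q w hstab hwθ
    have hinv : ∀ x ∈ insert (-θ) (Set.range Δ),
        w.symm x ∈ insert (-θ) (Set.range Δ) := by
      intro x hx
      rw [← hstab] at hx
      obtain ⟨y, hy, rfl⟩ := hx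
      simpa using hy
    have hips : ∀ l, ⟪Δ l, w (ϖ q)⟫ = ⟪w.symm (Δ l), ϖ q⟫ := by
      intro l
      conv_lhs => rw [← w.apply_symm_apply (Δ l)]
      rw [w.inner_map_map]
    constructor
    · intro l hl
      have h1 : w.symm (Δ l) ∈ insert (-θ) (Set.range Δ) :=
        hinv _ (Set.mem_insert_of_mem _ ⟨l, rfl⟩)
      have h2 : w.symm (Δ l) ≠ -θ := by
        intro h
        apply hl
        apply hΔinj
        have e : Δ l = w (-θ) := by rw [← h, w.apply_symm_apply]
        rw [e, hwθ]
      obtain ⟨l', hl'⟩ : ∃ l', Δ l' = w.symm (Δ l) := by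
        rcases Set.mem_insert_iff.mp h1 with h | ⟨l', hl'⟩
        · exact absurd h h2
        · exact ⟨l', hl'⟩
      rw [hips l, ← hl', real_inner_comm, hϖ]
      have hcond : q = l' ↔ Δ l = w (Δ q) := by
        constructor
        · rintro rfl
          rw [hl', w.apply_symm_apply]
        · intro h
          apply hΔinj
          rw [hl', h, w.symm_apply_apply]
      by_cases hc : q = l'
      · rw [if_pos hc, if_pos (hcond.mp hc)]
      · rw [if_neg hc, if_neg (fun h => hc (hcond.mpr h))]
    · have hps : w.symm (Δ p) = -θ := by rw [← hwθ, w.symm_apply_apply]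
      rw [hips p, hps, inner_neg_left, hθsum, sum_inner]
      simp only [real_inner_smul_left, hϖ', mul_ite, mul_one, mul_zero]
      rw [Finset.sum_ite_eq _ q (fun l => (m l : ℝ))]
      simp
  constructor
  · -- case wi * wj = 1
    intro h1
    have hijθ : wi (Δ j) = -θ := by
      have e : wi (wj (-θ)) = (wi * wj) (-θ) := by
        rw [LinearIsometryEquiv.coe_mul]; rfl
      rw [← hwjθ, e, h1]; rfl
    have hkey := key i j wi hwistab hwiθ
    have heq : wi (ϖ j) = -(ϖ i) := by
      apply hext
      intro l
      rw [inner_neg_right, hϖ' i l]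
      by_cases hl : l = i
      · subst hl
        rw [hkey.2, hj, if_pos rfl]
        norm_num
      · rw [hkey.1 l hl, hijθ, if_neg (hθΔ l), if_neg (fun h => hl h.symm)]
        norm_num
    refine ⟨heq, ?_⟩
    have hmem := (hW wi hwiW).2 (ϖ j) (hϖint j)
    rw [heq] at hmem
    have e : ϖ j - -(ϖ i) = ϖ j + ϖ i := by abel
    rwa [e] at hmem
  · -- case wi * wj = wk
    intro k hk wk hwkW hwkstab hwkθ h2
    have hijk : wi (Δ j) = Δ k := by
      have e : wi (wj (-θ)) = (wi * wj) (-θ) := by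
        rw [LinearIsometryEquiv.coe_mul]; rfl
      rw [← hwjθ, e, h2, hwkθ]
    have hki : k ≠ i := by
      intro h
      apply hθΔ j
      have e : wi (Δ j) = wi (-θ) := by rw [hijk, h, hwiθ]
      exact wi.injective e
    have hkey := key i j wi hwistab hwiθ
    have heq : wi (ϖ j) = ϖ k - ϖ i := by
      apply hext
      intro l
      rw [inner_sub_right, hϖ' k l, hϖ' i l]
      by_cases hl : l = i
      · subst hl
        rw [hkey.2, hj, if_neg hki, if_pos rfl]
        norm_num
      · rw [hkey.1 l hl, hijk, if_neg (fun h : i = l => hl h.symm)]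
        have hcond : Δ l = Δ k ↔ k = l := ⟨fun h => (hΔinj h).symm, fun h => by rw [h]⟩
        by_cases hc : k = l
        · rw [if_pos (hcond.mpr hc), if_pos hc]; norm_num
        · rw [if_neg (fun h => hc (hcond.mp h)), if_neg hc]; norm_num
    refine ⟨heq, ?_⟩
    have hmem := (hW wi hwiW).2 (ϖ j) (hϖint j)
    rw [heq] at hmem
    have e : ϖ j - (ϖ k - ϖ i) = ϖ i + ϖ j - ϖ k := by abel
    rwa [e] at hmem
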